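/- Let p be a prime number, A a commutative ring, and t ∈ A. In the ring B = A[X,Y]/(X^p − t·X, Y^p − t·Y), the annihilator of the ideal generated by x and y (the augmentation ideal) equals the principal ideal generated by (x^{p−1} − t)·(y^{p−1} − t). (This computes the scheme of primitive elements of G × G for an Oort–Tate group scheme G.) -/

import Mathlib

open MvPolynomial

set_option synthInstance.maxHeartbeats 1000000
set_option maxHeartbeats 1000000

namespace OTAux
theorem monic_mul_cancel {R : Type*} [CommRing R] {m h : Polynomial R} (hm : m.Monic)
    (hh : h * m = 0) : h = 0 :=
  hm.isRegular.right (by simpa using hh)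

theorem CX_dvd_of_map_eval_zero {A : Type} [CommRing A] {w : Polynomial (Polynomial A)}
    (h : w.map (Polynomial.evalRingHom (0 : A)) = 0) :
    Polynomial.C Polynomial.X ∣ w := by
  rw [Polynomial.C_dvd_iff_dvd_coeff]
  intro n
  rw [Polynomial.X_dvd_iff, Polynomial.coeff_zero_eq_eval_zero]
  have := congrArg (fun z => Polynomial.coeff z n) h
  simpa [Polynomial.coeff_map] using this

theorem cancel_CX {A : Type} [CommRing A] {w : Polynomial (Polynomial A)}
    (h : w * Polynomial.C Polynomial.X = 0) : w = 0 := by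
  apply Polynomial.ext
  intro n
  have := congrArg (fun z => Polynomial.coeff z n) h
  simp only [Polynomial.coeff_mul_C, Polynomial.coeff_zero] at this
  simpa using monic_mul_cancel Polynomial.monic_X this

theorem decomp {A : Type} [CommRing A] [Nontrivial A] {f0 : Polynomial A} (hf : f0.Monic)
    (w : Polynomial (Polynomial A)) :
    ∃ e r : Polynomial (Polynomial A),
      w = Polynomial.C f0 * e + r ∧ ∀ n, ((r.coeff n).degree < f0.degree) := by
  induction w using Polynomial.induction_on' with
  | add a b ha hb =>
    obtain ⟨e1, r1, h1, d1⟩ := ha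
    obtain ⟨e2, r2, h2, d2⟩ := hb
    refine ⟨e1 + e2, r1 + r2, by rw [h1, h2]; ring, fun n => ?_⟩
    rw [Polynomial.coeff_add]
    exact lt_of_le_of_lt (Polynomial.degree_add_le _ _) (max_lt (d1 n) (d2 n))
  | monomial n a =>
    refine ⟨Polynomial.monomial n (a /ₘ f0), Polynomial.monomial n (a %ₘ f0), ?_, ?_⟩
    · rw [Polynomial.C_mul_monomial, ← map_add]
      rw [add_comm, Polynomial.modByMonic_add_div a f0]
    · intro m
      rw [Polynomial.coeff_monomial]
      split
      · exact Polynomial.degree_modByMonic_lt a hf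
      · rw [Polynomial.degree_zero]
        exact bot_lt_iff_ne_bot.mpr (by simpa [Polynomial.degree_eq_bot] using hf.ne_zero)

theorem coeff_mul_bound {A : Type} [CommRing A] {r s : Polynomial (Polynomial A)} {d : WithBot ℕ}
    (hd : ⊥ < d) (hr : ∀ n, (r.coeff n).degree < d) (hs : ∀ n, (s.coeff n).degree ≤ 0) :
    ∀ n, (((r * s).coeff n).degree < d) := by
  intro n
  rw [Polynomial.coeff_mul]
  refine lt_of_le_of_lt (Polynomial.degree_sum_le _ _) ?_
  rw [Finset.sup_lt_iff hd]
  intro b _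
  refine lt_of_le_of_lt (Polynomial.degree_mul_le _ _) ?_
  refine lt_of_le_of_lt ?_ (hr b.1)
  simpa using add_le_add_right (hs b.2) (r.coeff b.1).degree

theorem mainP {A : Type} [CommRing A] [Nontrivial A] (p : ℕ) (hp : p.Prime) (t : A)
    (G1 G2 G3 : Polynomial (Polynomial A))
    (hG1 : G1 = (Polynomial.X ^ (p - 1) - Polynomial.C (Polynomial.C t)) *
      Polynomial.C (Polynomial.X ^ (p - 1) - Polynomial.C t))
    (hG2 : G2 = Polynomial.X ^ p - Polynomial.C (Polynomial.C t) * Polynomial.X)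
    (hG3 : G3 = Polynomial.C (Polynomial.X ^ p - Polynomial.C t * Polynomial.X))
    (q : Polynomial (Polynomial A))
    (h1 : q * Polynomial.C Polynomial.X ∈ Ideal.span {G2, G3})
    (h2 : q * Polynomial.X ∈ Ideal.span {G2, G3}) :
    q ∈ Ideal.span {G1, G2, G3} := by
  have hp1 : p - 1 + 1 = p := Nat.succ_pred_eq_of_pos hp.pos
  have hppos : 0 < p - 1 := by have := hp.two_le; omega
  set f0 : Polynomial A := Polynomial.X ^ (p - 1) - Polynomial.C t with hf0def
  set g : Polynomial (Polynomial A) :=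
    Polynomial.X ^ (p - 1) - Polynomial.C (Polynomial.C t) with hgdef
  set x : Polynomial (Polynomial A) := Polynomial.C Polynomial.X with hxdef
  have hf0 : f0.Monic := by
    apply Polynomial.monic_X_pow_sub
    refine lt_of_le_of_lt Polynomial.degree_C_le ?_
    exact_mod_cast hppos
  have hg0 : (Polynomial.X ^ (p - 1) - Polynomial.C t : Polynomial A).Monic := hf0
  -- key factorizations
  have hG3' : G3 = x * Polynomial.C f0 := by
    rw [hG3, hxdef, hf0def, ← map_mul]
    congr 1
    rw [← hp1]; ring_nf; rw [show 1 + (p - 1) - 1 = p - 1 from by omega]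
  have hG2' : G2 = Polynomial.X * g := by
    rw [hG2, hgdef, ← hp1]; ring_nf; rw [show 1 + (p - 1) - 1 = p - 1 from by omega]
  -- the evaluation-at-zero map
  set φ : Polynomial A →+* A := Polynomial.evalRingHom (0 : A) with hφdef
  have hφC : ∀ a : Polynomial A,
      (Polynomial.C a : Polynomial (Polynomial A)).map φ = Polynomial.C (φ a) := fun a =>
    Polynomial.map_C φ
  have hφx : x.map φ = 0 := by
    rw [hxdef, Polynomial.map_C]
    simp [hφdef]
  have hφG3 : G3.map φ = 0 := by
    rw [hG3, Polynomial.map_C]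
    simp [hφdef, zero_pow hp.ne_zero]
  have hφG2 : G2.map φ =
      Polynomial.X * (Polynomial.X ^ (p - 1) - Polynomial.C t) := by
    rw [hG2]
    simp only [Polynomial.map_sub, Polynomial.map_pow, Polynomial.map_X, Polynomial.map_mul,
      Polynomial.map_C]
    simp [hφdef]
    rw [← hp1]; ring_nf; rw [show 1 + (p - 1) - 1 = p - 1 from by omega]
  have hφg : g.map φ = Polynomial.X ^ (p - 1) - Polynomial.C t := by
    rw [hgdef]
    simp only [Polynomial.map_sub, Polynomial.map_pow, Polynomial.map_X, Polynomial.map_C]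
    simp [hφdef]
  have hmonXg : (Polynomial.X * (Polynomial.X ^ (p - 1) - Polynomial.C t) :
      Polynomial A).Monic := Polynomial.monic_X.mul hg0
  -- Step 1
  obtain ⟨v, u, huv⟩ := Ideal.mem_span_pair.mp h1
  have hφv : v.map φ = 0 := by
    have := congrArg (Polynomial.map φ) huv
    simp only [Polynomial.map_add, Polynomial.map_mul, hφG2, hφG3, hφx, mul_zero, add_zero] at this
    exact monic_mul_cancel hmonXg this
  obtain ⟨v1, hv1⟩ := CX_dvd_of_map_eval_zero hφv
  have h3 : (q - (u * Polynomial.C f0 + v1 * G2)) * x = 0 := by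
    linear_combination (-1 : Polynomial (Polynomial A)) * huv + G2 * hv1 + u * hG3'
  have hq1 : q = u * Polynomial.C f0 + v1 * G2 := by
    have := cancel_CX h3
    linear_combination this
  -- Step 2
  have hmem : u * Polynomial.C f0 * Polynomial.X ∈ Ideal.span {G2, G3} := by
    have hG2mem : G2 ∈ Ideal.span ({G2, G3} : Set (Polynomial (Polynomial A))) :=
      Ideal.subset_span (by simp)
    have : q * Polynomial.X - v1 * G2 * Polynomial.X ∈ Ideal.span {G2, G3} :=
      Submodule.sub_mem _ h2 (Ideal.mul_mem_right _ _ (Ideal.mul_mem_left _ _ hG2mem))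
    have heq : u * Polynomial.C f0 * Polynomial.X =
        q * Polynomial.X - v1 * G2 * Polynomial.X := by
      rw [hq1]; ring
    rwa [heq]
  obtain ⟨c2, c3, hc⟩ := Ideal.mem_span_pair.mp hmem
  -- Step 3
  obtain ⟨e, r, hd, hr⟩ := decomp hf0 c2
  have hsG2 : ∀ n, ((G2.coeff n).degree ≤ 0) := by
    intro n
    have hmapc : G2 = (Polynomial.X ^ p - Polynomial.C t * Polynomial.X : Polynomial A).map
        (Polynomial.C : A →+* Polynomial A) := by
      simp [hG2]
    rw [hmapc, Polynomial.coeff_map]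
    exact Polynomial.degree_C_le
  have hd0 : (⊥ : WithBot ℕ) < f0.degree :=
    bot_lt_iff_ne_bot.mpr (by simpa [Polynomial.degree_eq_bot] using hf0.ne_zero)
  have hbound := coeff_mul_bound hd0 hr hsG2
  have hK : Polynomial.C f0 * (u * Polynomial.X - c3 * x - e * G2) = r * G2 := by
    linear_combination (-1 : Polynomial (Polynomial A)) * hc + G2 * hd + c3 * hG3'
  have hKn : ∀ n, (u * Polynomial.X - c3 * x - e * G2).coeff n = 0 := by
    intro n
    by_contra h0
    have e1 : f0 * (u * Polynomial.X - c3 * x - e * G2).coeff n = (r * G2).coeff n := by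
      have := congrArg (fun z => Polynomial.coeff z n) hK
      simpa [Polynomial.coeff_C_mul] using this
    have hlt : (f0 * (u * Polynomial.X - c3 * x - e * G2).coeff n).degree < f0.degree := by
      rw [e1]; exact hbound n
    rw [mul_comm, Polynomial.Monic.degree_mul hf0] at hlt
    have hge : f0.degree ≤ ((u * Polynomial.X - c3 * x - e * G2).coeff n).degree + f0.degree := by
      simpa using add_le_add_left (Polynomial.zero_le_degree_iff.mpr h0) f0.degree
    exact absurd (lt_of_le_of_lt hge hlt) (lt_irrefl _)
  have hK0 : u * Polynomial.X - c3 * x - e * G2 = 0 := Polynomial.ext hKn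
  -- Step 4
  have hmap4 : u.map φ * Polynomial.X =
      (e.map φ) * (Polynomial.X * (Polynomial.X ^ (p - 1) - Polynomial.C t)) := by
    have := congrArg (Polynomial.map φ) hK0
    simp only [Polynomial.map_sub, Polynomial.map_mul, Polynomial.map_X, hφx, hφG2,
      mul_zero, Polynomial.map_zero] at this
    linear_combination this
  have hcancel : (u.map φ - e.map φ * (Polynomial.X ^ (p - 1) - Polynomial.C t)) *
      Polynomial.X = 0 := by
    linear_combination hmap4
  have hφu : (u - e * g).map φ = 0 := by
    have h4 := monic_mul_cancel Polynomial.monic_X hcancel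
    rw [Polynomial.map_sub, Polynomial.map_mul, hφg]
    linear_combination h4
  obtain ⟨u1, hu1⟩ := CX_dvd_of_map_eval_zero hφu
  -- Finish
  have hqfin : q = e * G1 + u1 * G3 + v1 * G2 := by
    rw [hG1]
    linear_combination hq1 + Polynomial.C f0 * hu1 + (-u1 : Polynomial (Polynomial A)) * hG3'
  rw [hqfin]
  refine Ideal.add_mem _ (Ideal.add_mem _ ?_ ?_) ?_
  · exact Ideal.mul_mem_left _ _ (Ideal.subset_span (by simp))
  · exact Ideal.mul_mem_left _ _ (Ideal.subset_span (by simp))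
  · exact Ideal.mul_mem_left _ _ (Ideal.subset_span (by simp))

theorem mem_span_equiv {R S : Type} [CommRing R] [CommRing S] (e : R ≃+* S) (s : Set R) (w : R) :
    w ∈ Ideal.span s ↔ e w ∈ Ideal.span (⇑e '' s) := by
  rw [← Ideal.map_span e s]
  exact Ideal.apply_mem_of_equiv_iff.symm

theorem easy {A : Type} [CommRing A] (p : ℕ) (hp : p.Prime) (t : A)
    (q : MvPolynomial (Fin 2) A)
    (h : q ∈ Ideal.span {(X 0 ^ (p - 1) - C t) * (X 1 ^ (p - 1) - C t),
      (X 0 : MvPolynomial (Fin 2) A) ^ p - C t * X 0,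
      (X 1 : MvPolynomial (Fin 2) A) ^ p - C t * X 1}) :
    (q * X 0 ∈ Ideal.span {(X 0 : MvPolynomial (Fin 2) A) ^ p - C t * X 0,
      (X 1 : MvPolynomial (Fin 2) A) ^ p - C t * X 1}) ∧
    (q * X 1 ∈ Ideal.span {(X 0 : MvPolynomial (Fin 2) A) ^ p - C t * X 0,
      (X 1 : MvPolynomial (Fin 2) A) ^ p - C t * X 1}) := by
  obtain ⟨k, rfl⟩ : ∃ k, p = k + 1 := ⟨p - 1, by have := hp.pos; omega⟩
  simp only [Nat.add_sub_cancel] at h ⊢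
  obtain ⟨a, z, hz, rfl⟩ := Ideal.mem_span_insert.mp h
  constructor
  · have : (a * ((X 0 ^ k - C t) * (X 1 ^ k - C t)) + z) * X 0 =
        a * ((X 1 ^ k - C t) * ((X 0 : MvPolynomial (Fin 2) A) ^ (k + 1) - C t * X 0)) +
          z * X 0 := by ring
    rw [this]
    exact Ideal.add_mem _
      (Ideal.mul_mem_left _ _ (Ideal.mul_mem_left _ _ (Ideal.subset_span (by simp))))
      (Ideal.mul_mem_right _ _ hz)
  · have : (a * ((X 0 ^ k - C t) * (X 1 ^ k - C t)) + z) * X 1 =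
        a * ((X 0 ^ k - C t) * ((X 1 : MvPolynomial (Fin 2) A) ^ (k + 1) - C t * X 1)) +
          z * X 1 := by ring
    rw [this]
    exact Ideal.add_mem _
      (Ideal.mul_mem_left _ _ (Ideal.mul_mem_left _ _ (Ideal.subset_span (by simp))))
      (Ideal.mul_mem_right _ _ hz)

noncomputable def myEquiv (A : Type) [CommRing A] :
    MvPolynomial (Fin 2) A ≃ₐ[A] Polynomial (Polynomial A) :=
  (finSuccEquiv A 1).trans (Polynomial.mapAlgEquiv
    ((finSuccEquiv A 0).trans (Polynomial.mapAlgEquiv (isEmptyAlgEquiv A (Fin 0)))))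

theorem myEquiv_X0 {A : Type} [CommRing A] : myEquiv A (X 0) = Polynomial.X := by
  simp [myEquiv, finSuccEquiv_X_zero, Polynomial.coe_mapAlgEquiv]

theorem myEquiv_X1 {A : Type} [CommRing A] : myEquiv A (X 1) = Polynomial.C Polynomial.X := by
  show myEquiv A (X (Fin.succ (0 : Fin 1))) = Polynomial.C Polynomial.X
  rw [myEquiv]
  simp only [AlgEquiv.trans_apply, finSuccEquiv_X_succ, Polynomial.coe_mapAlgEquiv,
    Polynomial.map_C, AlgEquiv.trans_apply, finSuccEquiv_X_zero]
  congr 1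
  simp [Polynomial.coe_mapAlgEquiv, finSuccEquiv_X_zero]

theorem myEquiv_C {A : Type} [CommRing A] (a : A) :
    myEquiv A (C a) = Polynomial.C (Polynomial.C a) := by
  have h : (C a : MvPolynomial (Fin 2) A) = algebraMap A _ a := rfl
  rw [h, AlgEquiv.commutes]
  rw [Polynomial.algebraMap_apply, Polynomial.algebraMap_apply]
  simp


theorem hard {A : Type} [CommRing A] [Nontrivial A] (p : ℕ) (hp : p.Prime) (t : A)
    (q : MvPolynomial (Fin 2) A)
    (h1 : q * X 0 ∈ Ideal.span {(X 0 : MvPolynomial (Fin 2) A) ^ p - C t * X 0,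
      (X 1 : MvPolynomial (Fin 2) A) ^ p - C t * X 1})
    (h2 : q * X 1 ∈ Ideal.span {(X 0 : MvPolynomial (Fin 2) A) ^ p - C t * X 0,
      (X 1 : MvPolynomial (Fin 2) A) ^ p - C t * X 1}) :
    q ∈ Ideal.span {(X 0 ^ (p - 1) - C t) * (X 1 ^ (p - 1) - C t),
      (X 0 : MvPolynomial (Fin 2) A) ^ p - C t * X 0,
      (X 1 : MvPolynomial (Fin 2) A) ^ p - C t * X 1} := by
  have hco : ⇑((myEquiv A).toRingEquiv) = ⇑(myEquiv A) := rfl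
  rw [mem_span_equiv (myEquiv A).toRingEquiv] at h1 h2 ⊢
  simp only [Set.image_insert_eq, Set.image_singleton, hco] at h1 h2 ⊢
  have hrel0 : myEquiv A ((X 0 : MvPolynomial (Fin 2) A) ^ p - C t * X 0) =
      Polynomial.X ^ p - Polynomial.C (Polynomial.C t) * Polynomial.X := by
    rw [map_sub, map_pow, map_mul, myEquiv_X0, myEquiv_C]
  have hrel1 : myEquiv A ((X 1 : MvPolynomial (Fin 2) A) ^ p - C t * X 1) =
      Polynomial.C (Polynomial.X ^ p - Polynomial.C t * Polynomial.X) := by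
    rw [map_sub, map_pow, map_mul, myEquiv_X1, myEquiv_C, ← Polynomial.C_pow,
      ← Polynomial.C_mul, ← Polynomial.C_sub]
  have hF : myEquiv A (((X 0 : MvPolynomial (Fin 2) A) ^ (p - 1) - C t) *
      (X 1 ^ (p - 1) - C t)) =
      (Polynomial.X ^ (p - 1) - Polynomial.C (Polynomial.C t)) *
        Polynomial.C (Polynomial.X ^ (p - 1) - Polynomial.C t) := by
    rw [map_mul, map_sub, map_sub, map_pow, map_pow, myEquiv_X0, myEquiv_X1, myEquiv_C,
      ← Polynomial.C_pow, ← Polynomial.C_sub]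
  rw [map_mul, myEquiv_X0, hrel0, hrel1] at h1
  rw [map_mul, myEquiv_X1, hrel0, hrel1] at h2
  rw [hF, hrel0, hrel1]
  exact mainP p hp t _ _ _ rfl rfl rfl _ h2 h1

end OTAux

/-- In `B = A[X,Y]/(X^p - tX, Y^p - tY)`, the annihilator of the augmentation
ideal `(x, y)` is the principal ideal `((x^(p-1) - t) * (y^(p-1) - t))`. -/
theorem stmt4 (p : ℕ) (hp : p.Prime) (A : Type) [CommRing A] (t : A) :
    let B := MvPolynomial (Fin 2) A ⧸
      Ideal.span {(X 0 : MvPolynomial (Fin 2) A) ^ p - C t * X 0,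
                  (X 1 : MvPolynomial (Fin 2) A) ^ p - C t * X 1}
    let x : B := Ideal.Quotient.mk _ (X 0)
    let y : B := Ideal.Quotient.mk _ (X 1)
    let tB : B := Ideal.Quotient.mk _ (C t)
    (Ideal.span {x, y}).annihilator =
      Ideal.span {(x ^ (p - 1) - tB) * (y ^ (p - 1) - tB)} := by
  intro B x y tB
  rcases subsingleton_or_nontrivial A with hA | hA
  · haveI : Subsingleton B := Ideal.Quotient.mk_surjective.subsingleton
    exact Subsingleton.elim _ _
  · have key : ∀ w : MvPolynomial (Fin 2) A,
        Ideal.Quotient.mk (Ideal.span {(X 0 : MvPolynomial (Fin 2) A) ^ p - C t * X 0,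
            (X 1 : MvPolynomial (Fin 2) A) ^ p - C t * X 1}) w ∈
          Ideal.span {Ideal.Quotient.mk
            (Ideal.span {(X 0 : MvPolynomial (Fin 2) A) ^ p - C t * X 0,
              (X 1 : MvPolynomial (Fin 2) A) ^ p - C t * X 1})
            (((X 0 : MvPolynomial (Fin 2) A) ^ (p - 1) - C t) * (X 1 ^ (p - 1) - C t))} ↔
          w ∈ Ideal.span {((X 0 : MvPolynomial (Fin 2) A) ^ (p - 1) - C t) *
              (X 1 ^ (p - 1) - C t),
            (X 0 : MvPolynomial (Fin 2) A) ^ p - C t * X 0,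
            (X 1 : MvPolynomial (Fin 2) A) ^ p - C t * X 1} := by
      intro w
      rw [show Ideal.span {Ideal.Quotient.mk
            (Ideal.span {(X 0 : MvPolynomial (Fin 2) A) ^ p - C t * X 0,
              (X 1 : MvPolynomial (Fin 2) A) ^ p - C t * X 1})
            (((X 0 : MvPolynomial (Fin 2) A) ^ (p - 1) - C t) * (X 1 ^ (p - 1) - C t))} =
          Ideal.map (Ideal.Quotient.mk
            (Ideal.span {(X 0 : MvPolynomial (Fin 2) A) ^ p - C t * X 0,
              (X 1 : MvPolynomial (Fin 2) A) ^ p - C t * X 1}))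
            (Ideal.span {((X 0 : MvPolynomial (Fin 2) A) ^ (p - 1) - C t) *
              (X 1 ^ (p - 1) - C t)}) from by
        rw [Ideal.map_span, Set.image_singleton]]
      rw [← Ideal.mem_comap, Ideal.comap_map_of_surjective _ Ideal.Quotient.mk_surjective,
        ← RingHom.ker_eq_comap_bot, Ideal.mk_ker, Ideal.span_insert, Ideal.span_insert, Ideal.span_insert]
    have hgen : (x ^ (p - 1) - tB) * (y ^ (p - 1) - tB) =
        Ideal.Quotient.mk (Ideal.span {(X 0 : MvPolynomial (Fin 2) A) ^ p - C t * X 0,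
            (X 1 : MvPolynomial (Fin 2) A) ^ p - C t * X 1})
          (((X 0 : MvPolynomial (Fin 2) A) ^ (p - 1) - C t) * (X 1 ^ (p - 1) - C t)) := by
      show (Ideal.Quotient.mk _ (X 0) ^ (p - 1) - Ideal.Quotient.mk _ (C t)) *
          (Ideal.Quotient.mk _ (X 1) ^ (p - 1) - Ideal.Quotient.mk _ (C t)) = _
      simp only [map_mul, map_sub, map_pow]
    ext b
    obtain ⟨q, rfl⟩ := Ideal.Quotient.mk_surjective b
    rw [hgen]
    rw [show (Ideal.span {x, y} : Ideal B) = Submodule.span B {x, y} from rfl]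
    rw [Submodule.mem_annihilator_span, key q]
    constructor
    · intro h
      have h0 := h ⟨x, Set.mem_insert _ _⟩
      have h1 := h ⟨y, Set.mem_insert_of_mem _ rfl⟩
      have h0' : q * X 0 ∈ Ideal.span {(X 0 : MvPolynomial (Fin 2) A) ^ p - C t * X 0,
          (X 1 : MvPolynomial (Fin 2) A) ^ p - C t * X 1} :=
        (Ideal.Quotient.eq_zero_iff_mem).mp (by rw [map_mul]; exact h0)
      have h1' : q * X 1 ∈ Ideal.span {(X 0 : MvPolynomial (Fin 2) A) ^ p - C t * X 0,
          (X 1 : MvPolynomial (Fin 2) A) ^ p - C t * X 1} :=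
        (Ideal.Quotient.eq_zero_iff_mem).mp (by rw [map_mul]; exact h1)
      exact OTAux.hard p hp t q h0' h1'
    · intro h
      have he := OTAux.easy p hp t q h
      rintro ⟨n, hn⟩
      rcases Set.mem_insert_iff.mp hn with rfl | hn'
      · show Ideal.Quotient.mk _ q * Ideal.Quotient.mk _ (X 0) = 0
        rw [← map_mul, Ideal.Quotient.eq_zero_iff_mem]
        exact he.1
      · rcases Set.mem_singleton_iff.mp hn' with rfl
        show Ideal.Quotient.mk _ q * Ideal.Quotient.mk _ (X 1) = 0
        rw [← map_mul, Ideal.Quotient.eq_zero_iff_mem]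
        exact he.2
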